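/- Let N be a positive integer and let q, t, c ∈ ℂ be arbitrary. Then ∑_{n=0}^{N−1} c^n · [ (t;q)_n − (t;q)_N ] = t · ∑_{n=1}^{N} ( ∑_{j=0}^{n−1} c^j ) · (t;q)_{n−1} · q^{n−1}. In particular, when c ≠ 1 the right-hand side equals (t/(1−c)) · ∑_{n=1}^{N} (1 − c^n) · (t;q)_{n−1} · q^{n−1}. -/

import Mathlib

/-- Finite q-Pochhammer symbol `(x;q)_n = ∏_{k=0}^{n-1} (1 - x q^k)`. -/
noncomputable def qPoch (x q : ℂ) (n : ℕ) : ℂ := ∏ k ∈ Finset.range n, (1 - x * q ^ k)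

/-- Infinite q-Pochhammer symbol `(x;q)_∞ = ∏_{k=0}^{∞} (1 - x q^k)`. -/
noncomputable def qPochInf (x q : ℂ) : ℂ := ∏' k : ℕ, (1 - x * q ^ k)

/-- Gaussian binomial coefficient `[n k]_q`, equal to `0` for `k > n`. -/
noncomputable def gbinom (q : ℂ) (n k : ℕ) : ℂ :=
  if k ≤ n then qPoch q q n / (qPoch q q k * qPoch q q (n - k)) else 0

lemma qPoch_succ (t q : ℂ) (n : ℕ) :
    qPoch t q (n + 1) = qPoch t q n * (1 - t * q ^ n) := by
  simp [qPoch, Finset.prod_range_succ]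

lemma qPoch_tele (t q : ℂ) (n N : ℕ) (h : n ≤ N) :
    qPoch t q n - qPoch t q N = ∑ m ∈ Finset.Ico n N, t * q ^ m * qPoch t q m := by
  induction N, h using Nat.le_induction with
  | base => simp
  | succ N hN ih =>
      rw [Finset.sum_Ico_succ_top hN, ← ih, qPoch_succ]
      ring

theorem stmt13 (N : ℕ) (hN : 1 ≤ N) (q t c : ℂ) :
    (∑ n ∈ Finset.range N, c ^ n * (qPoch t q n - qPoch t q N)
        = t * ∑ n ∈ Finset.range N,
            (∑ j ∈ Finset.range (n + 1), c ^ j) * qPoch t q n * q ^ n)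
    ∧ (c ≠ 1 →
        ∑ n ∈ Finset.range N, c ^ n * (qPoch t q n - qPoch t q N)
          = t / (1 - c) * ∑ n ∈ Finset.range N,
              (1 - c ^ (n + 1)) * qPoch t q n * q ^ n) := by
  have h1 : ∑ n ∈ Finset.range N, c ^ n * (qPoch t q n - qPoch t q N)
      = t * ∑ n ∈ Finset.range N,
          (∑ j ∈ Finset.range (n + 1), c ^ j) * qPoch t q n * q ^ n := by
    calc ∑ n ∈ Finset.range N, c ^ n * (qPoch t q n - qPoch t q N)
        = ∑ n ∈ Finset.Ico 0 N, ∑ m ∈ Finset.Ico n N,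
            c ^ n * (t * q ^ m * qPoch t q m) := by
          rw [Finset.range_eq_Ico]
          refine Finset.sum_congr rfl fun n hn => ?_
          rw [qPoch_tele t q n N (Finset.mem_Ico.mp hn).2.le, Finset.mul_sum]
      _ = ∑ m ∈ Finset.Ico 0 N, ∑ n ∈ Finset.Ico 0 (m + 1),
            c ^ n * (t * q ^ m * qPoch t q m) := Finset.sum_Ico_Ico_comm 0 N _
      _ = t * ∑ n ∈ Finset.range N,
            (∑ j ∈ Finset.range (n + 1), c ^ j) * qPoch t q n * q ^ n := by
          rw [Finset.mul_sum, ← Finset.range_eq_Ico]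
          refine Finset.sum_congr rfl fun m _ => ?_
          rw [← Finset.range_eq_Ico, ← Finset.sum_mul]
          ring
  refine ⟨h1, fun hc => ?_⟩
  rw [h1, Finset.mul_sum, Finset.mul_sum]
  have hc' : (1 : ℂ) - c ≠ 0 := sub_ne_zero.mpr (Ne.symm hc)
  refine Finset.sum_congr rfl fun n _ => ?_
  have h2 : (∑ j ∈ Finset.range (n + 1), c ^ j) * (1 - c) = 1 - c ^ (n + 1) := by
    linear_combination -geom_sum_mul c (n + 1)
  rw [← h2]
  field_simp
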